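/- Let S be a set of points in general position in the plane and let s, t be two distinct points of S. Then there exists a plane Hamiltonian path on S that starts at s and ends at t. -/

import Mathlib

open Set
open scoped Classical

noncomputable section

/-- Points in the plane. -/
abbrev Pt : Type := ℝ × ℝ

/-- Orientation determinant of the triple `(a, b, p)`:
positive iff `p` lies strictly to the left of the directed line from `a` to `b`. -/
def det3 (a b p : Pt) : ℝ :=
  (b.1 - a.1) * (p.2 - a.2) - (b.2 - a.2) * (p.1 - a.1)

/-- A finite point set is in general position if no three of its points are collinear. -/
def GenPos (S : Finset Pt) : Prop :=
  ∀ p ∈ S, ∀ q ∈ S, ∀ r ∈ S,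
    p ≠ q → p ≠ r → q ≠ r → ¬ Collinear ℝ ({p, q, r} : Set Pt)

/-- The list of (directed) edges of a polygonal path given by its list of vertices. -/
def edgeList (l : List Pt) : List (Pt × Pt) := l.zip l.tail

/-- The segment `ab` is an edge of the path `l`, i.e. `a` and `b` are consecutive on `l`. -/
def IsEdgeOf (a b : Pt) (l : List Pt) : Prop :=
  (a, b) ∈ edgeList l ∨ (b, a) ∈ edgeList l

/-- `l` is a plane (crossing-free) Hamiltonian path on the point set `S`:
its vertices are exactly the points of `S`, each visited once, and any two distinct
edges intersect only in common endpoints. -/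
def PlanePath (S : Finset Pt) (l : List Pt) : Prop :=
  l.Nodup ∧ l.toFinset = S ∧
  ∀ e ∈ edgeList l, ∀ f ∈ edgeList l, e ≠ f →
    segment ℝ e.1 e.2 ∩ segment ℝ f.1 f.2 ⊆
      (({e.1, e.2} : Set Pt) ∩ ({f.1, f.2} : Set Pt))

/-- Two paths are edge-disjoint: no segment is an edge of both. -/
def EdgeDisjoint (l₁ l₂ : List Pt) : Prop :=
  ∀ x y : Pt, IsEdgeOf x y l₁ → ¬ IsEdgeOf x y l₂

/-- `p` is a vertex of the boundary of the convex hull of `S`. -/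
def HullVertex (S : Finset Pt) (p : Pt) : Prop :=
  p ∈ Set.extremePoints ℝ (convexHull ℝ (S : Set Pt))

/-- `ab` is an edge of the boundary of the convex hull of `S`, i.e. `a` and `b` are
consecutive hull vertices: all other points of `S` lie strictly on one side of line `ab`. -/
def IsHullEdge (S : Finset Pt) (a b : Pt) : Prop :=
  a ∈ S ∧ b ∈ S ∧ a ≠ b ∧
  ((∀ p ∈ S, p ≠ a → p ≠ b → 0 < det3 a b p) ∨
   (∀ p ∈ S, p ≠ a → p ≠ b → det3 a b p < 0))

/-- The segment `xy` is a bridge over the line through `a` and `b`: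
it crosses the line `ℓ(ab)` but not the segment `ab`. -/
def IsBridge (a b x y : Pt) : Prop :=
  det3 a b x * det3 a b y < 0 ∧ segment ℝ x y ∩ segment ℝ a b = ∅

/-- The set of common edges of the two paths is exactly the segment `ab`. -/
def SharesExactly (a b : Pt) (l₁ l₂ : List Pt) : Prop :=
  IsEdgeOf a b l₁ ∧ IsEdgeOf a b l₂ ∧
  ∀ x y : Pt, IsEdgeOf x y l₁ → IsEdgeOf x y l₂ → ({x, y} : Set Pt) = ({a, b} : Set Pt)

lemma det3_swap23 (a b p : Pt) : det3 a p b = - det3 a b p := by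
  simp only [det3]; ring

lemma det3_swap12 (a b p : Pt) : det3 b a p = - det3 a b p := by
  simp only [det3]; ring

lemma det3_self2 (a b : Pt) : det3 a b a = 0 := by simp only [det3]; ring
lemma det3_self3 (a b : Pt) : det3 a b b = 0 := by simp only [det3]; ring

lemma det3_combo (a b x y : Pt) (u v : ℝ) (huv : u + v = 1) :
    det3 a b (u • x + v • y) = u * det3 a b x + v * det3 a b y := by
  have hv : v = 1 - u := by linarith
  subst hv
  simp only [det3, Prod.smul_fst, Prod.smul_snd, Prod.fst_add, Prod.snd_add, smul_eq_mul]
  ring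

/-- Bridge: vanishing determinant implies collinearity. -/
lemma collinear_of_det3 {p q r : Pt} (hpq : p ≠ q) (h : det3 p q r = 0) :
    Collinear ℝ ({p, q, r} : Set Pt) := by
  rw [collinear_iff_of_mem (show p ∈ ({p, q, r} : Set Pt) by simp)]
  refine ⟨q - p, ?_⟩
  intro z hz
  rcases hz with rfl | rfl | rfl
  · exact ⟨0, by simp⟩
  · exact ⟨1, by simp⟩
  · -- r = c • (q - p) + p
    have hne : q.1 - p.1 ≠ 0 ∨ q.2 - p.2 ≠ 0 := by
      by_contra hcon
      push_neg at hcon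
      apply hpq
      have h1 : q.1 = p.1 := by linarith [hcon.1]
      have h2 : q.2 = p.2 := by linarith [hcon.2]
      exact Prod.ext h1.symm h2.symm
    simp only [det3] at h
    rcases hne with h1 | h2
    · refine ⟨(z.1 - p.1)/(q.1 - p.1), ?_⟩
      have e1 : ((z.1 - p.1)/(q.1 - p.1)) • (q - p) + p = z := by
        apply Prod.ext
        · simp only [Prod.fst_add, Prod.smul_fst, Prod.fst_sub, smul_eq_mul]
          field_simp
          ring
        · simp only [Prod.snd_add, Prod.smul_snd, Prod.snd_sub, smul_eq_mul]
          field_simp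
          nlinarith [h]
      exact e1.symm
    · refine ⟨(z.2 - p.2)/(q.2 - p.2), ?_⟩
      have e1 : ((z.2 - p.2)/(q.2 - p.2)) • (q - p) + p = z := by
        apply Prod.ext
        · simp only [Prod.fst_add, Prod.smul_fst, Prod.fst_sub, smul_eq_mul]
          field_simp
          nlinarith [h]
        · simp only [Prod.snd_add, Prod.smul_snd, Prod.snd_sub, smul_eq_mul]
          field_simp
          ring
      exact e1.symm

lemma genPos_det {S : Finset Pt} (hgp : GenPos S) {p q r : Pt}
    (hp : p ∈ S) (hq : q ∈ S) (hr : r ∈ S)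
    (hpq : p ≠ q) (hpr : p ≠ r) (hqr : q ≠ r) : det3 p q r ≠ 0 := by
  intro h
  exact hgp p hp q hq r hr hpq hpr hqr (collinear_of_det3 hpq h)

/-- Sign of det3 along a segment. -/
lemma det3_seg (a b : Pt) {x y z : Pt} (hz : z ∈ segment ℝ x y) :
    ∃ u v : ℝ, 0 ≤ u ∧ 0 ≤ v ∧ u + v = 1 ∧
      det3 a b z = u * det3 a b x + v * det3 a b y := by
  obtain ⟨u, v, hu, hv, huv, rfl⟩ := hz
  exact ⟨u, v, hu, hv, huv, det3_combo a b x y u v huv⟩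

/-- A segment weakly on the non-positive side of line `ab` is disjoint from a segment
strictly on the positive side. -/
lemma seg_disj {a b x1 x2 y1 y2 : Pt}
    (hx1 : det3 a b x1 ≤ 0) (hx2 : det3 a b x2 ≤ 0)
    (hy1 : 0 < det3 a b y1) (hy2 : 0 < det3 a b y2) :
    segment ℝ x1 x2 ∩ segment ℝ y1 y2 = ∅ := by
  ext z
  simp only [mem_inter_iff, mem_empty_iff_false, iff_false, not_and]
  intro h1 h2
  obtain ⟨u, v, hu, hv, huv, he⟩ := det3_seg a b h1
  obtain ⟨u', v', hu', hv', huv', he'⟩ := det3_seg a b h2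
  have hzneg : det3 a b z ≤ 0 := by
    rw [he]
    have := mul_nonneg hu (neg_nonneg.mpr hx1)
    have := mul_nonneg hv (neg_nonneg.mpr hx2)
    nlinarith
  have hzpos : 0 < det3 a b z := by
    rw [he']
    rcases eq_or_lt_of_le hu' with h0 | h0
    · have hv1 : v' = 1 := by linarith
      rw [← h0, hv1]; simpa using hy2
    · have := mul_nonneg hv' hy2.le
      nlinarith
  linarith

/-- Two segments sharing the endpoint `c`, with directions not collinear,
meet only in `c`. -/
lemma seg_shared {c x w : Pt} (h : det3 c x w ≠ 0) :
    segment ℝ c x ∩ segment ℝ c w ⊆ ({c} : Set Pt) := by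
  intro z hz
  obtain ⟨h1, h2⟩ := hz
  have hz1 : det3 c x z = 0 := by
    obtain ⟨u, v, hu, hv, huv, he⟩ := det3_seg c x h1
    rw [det3_self2, det3_self3] at he
    simpa using he
  obtain ⟨u, v, hu, hv, huv, rfl⟩ := h2
  rw [det3_combo c x c w u v huv, det3_self2] at hz1
  have hv0 : v = 0 := by
    rcases mul_eq_zero.mp (by linarith : v * det3 c x w = 0) with h' | h'
    · exact h'
    · exact absurd h' h
  subst hv0
  have hu1 : u = 1 := by linarith
  subst hu1
  simp
/-- dot of `d` with `u - s`. -/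
def dotd (d s u : Pt) : ℝ := d.1 * (u.1 - s.1) + d.2 * (u.2 - s.2)

/-- Transitivity of the angular order around `s` within the open halfplane `dotd d s · < 0`. -/
lemma det3_trans {d s u v w : Pt}
    (hu : dotd d s u < 0) (hv : dotd d s v < 0) (hw : dotd d s w < 0)
    (h1 : 0 < det3 s u v) (h2 : 0 < det3 s v w) : 0 < det3 s u w := by
  have key : det3 s u v * dotd d s w - det3 s u w * dotd d s v
      + det3 s v w * dotd d s u = 0 := by
    simp only [det3, dotd]; ring
  by_contra hcon
  push_neg at hcon
  nlinarith [mul_pos h1 (neg_pos.mpr hw), mul_pos h2 (neg_pos.mpr hu),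
    mul_nonneg (neg_nonneg.mpr hcon) (neg_nonneg.mpr hv.le)]

/-- Existence of a minimal element for a transitive total relation on a finite set. -/
lemma exists_rel_min (T : Finset Pt) (r : Pt → Pt → Prop)
    (htr : ∀ a ∈ T, ∀ b ∈ T, ∀ c ∈ T, r a b → r b c → r a c)
    (htot : ∀ a ∈ T, ∀ b ∈ T, a ≠ b → (r a b ∧ ¬ r b a) ∨ (r b a ∧ ¬ r a b))
    (hne : T.Nonempty) :
    ∃ x ∈ T, ∀ u ∈ T, u ≠ x → r x u := by
  classical
  induction T using Finset.strongInduction with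
  | _ T ih =>
    obtain ⟨a, ha⟩ := hne
    by_cases hT : T.erase a = ∅
    · refine ⟨a, ha, ?_⟩
      intro u hu hua
      exact absurd (Finset.mem_erase.mpr ⟨hua, hu⟩) (by rw [hT]; simp)
    · have hsub : T.erase a ⊂ T := Finset.erase_ssubset ha
      obtain ⟨x, hx, hmin⟩ := ih (T.erase a) hsub
        (fun a' ha' b hb c hc => htr a' (Finset.mem_of_mem_erase ha') b
          (Finset.mem_of_mem_erase hb) c (Finset.mem_of_mem_erase hc))
        (fun a' ha' b hb => htot a' (Finset.mem_of_mem_erase ha') b (Finset.mem_of_mem_erase hb))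
        (Finset.nonempty_iff_ne_empty.mpr hT)
      have hxT : x ∈ T := Finset.mem_of_mem_erase hx
      have hax : a ≠ x := fun h => (Finset.mem_erase.mp hx).1 h.symm
      rcases htot a ha x hxT hax with ⟨h1, _⟩ | ⟨h1, _⟩
      · refine ⟨a, ha, ?_⟩
        intro u hu hua
        by_cases hux : u = x
        · exact hux ▸ h1
        · exact htr a ha x hxT u hu h1 (hmin u (Finset.mem_erase.mpr ⟨hua, hu⟩) hux)
      · refine ⟨x, hxT, ?_⟩
        intro u hu hux
        by_cases hua : u = a
        · exact hua ▸ h1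
        · exact hmin u (Finset.mem_erase.mpr ⟨hua, hu⟩) hux

/-- A strong hull vertex: all other points strictly on the negative side of
the line through `p` with normal `d`. -/
def SV (S : Finset Pt) (p : Pt) : Prop :=
  p ∈ S ∧ ∃ d : Pt, ∀ q ∈ S, q ≠ p → dotd d p q < 0

lemma exists_SV {S : Finset Pt} (hne : S.Nonempty) : ∃ p, SV S p := by
  classical
  -- choose a generic slope c
  obtain ⟨c, hc⟩ : ∃ c : ℝ, ∀ u ∈ S, ∀ v ∈ S, u ≠ v →
      u.1 + c * u.2 ≠ v.1 + c * v.2 := by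
    set F : Finset ℝ := (S ×ˢ S).image (fun w => (w.2.1 - w.1.1) / (w.1.2 - w.2.2)) with hF
    obtain ⟨c, hc⟩ := Finset.exists_notMem F
    refine ⟨c, ?_⟩
    intro u hu v hv huv heq
    by_cases h2 : u.2 = v.2
    · have : u.1 = v.1 := by rw [h2] at heq; linarith
      exact huv (Prod.ext this h2)
    · have hne2 : u.2 - v.2 ≠ 0 := sub_ne_zero.mpr h2
      apply hc
      rw [hF]
      apply Finset.mem_image.mpr
      refine ⟨(u, v), Finset.mem_product.mpr ⟨hu, hv⟩, ?_⟩
      field_simp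
      nlinarith [heq]
  obtain ⟨p, hp, hmax⟩ := S.exists_max_image (fun u => u.1 + c * u.2) hne
  refine ⟨p, hp, (1, c), ?_⟩
  intro q hq hqp
  have h1 := hmax q hq
  have h2 := hc q hq p hp hqp
  simp only [dotd]
  rcases lt_or_eq_of_le h1 with h | h
  · nlinarith
  · exact absurd h h2
lemma edgeList_nil : edgeList [] = [] := rfl
lemma edgeList_single (a : Pt) : edgeList [a] = [] := rfl
lemma edgeList_cons2 (a b : Pt) (l : List Pt) :
    edgeList (a :: b :: l) = (a, b) :: edgeList (b :: l) := rfl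

lemma mem_edgeList {l : List Pt} {u v : Pt} (h : (u, v) ∈ edgeList l) :
    u ∈ l ∧ v ∈ l := by
  induction l with
  | nil => simp [edgeList] at h
  | cons a l ih =>
    cases l with
    | nil => simp [edgeList] at h
    | cons b l' =>
      rw [edgeList_cons2] at h
      rcases List.mem_cons.mp h with h | h
      · obtain ⟨h1, h2⟩ := Prod.mk.injEq .. ▸ h
        simp_all
      · exact ⟨List.mem_cons_of_mem a (ih h).1, List.mem_cons_of_mem a (ih h).2⟩

lemma edgeList_ne {l : List Pt} (hl : l.Nodup) {u v : Pt} (h : (u, v) ∈ edgeList l) :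
    u ≠ v := by
  induction l with
  | nil => simp [edgeList] at h
  | cons a l ih =>
    cases l with
    | nil => simp [edgeList] at h
    | cons b l' =>
      rw [edgeList_cons2] at h
      rcases List.mem_cons.mp h with h | h
      · obtain ⟨h1, h2⟩ := Prod.mk.injEq .. ▸ h
        subst h1; subst h2
        intro hc; subst hc
        simp at hl
      · exact ih (List.Nodup.of_cons hl) h

lemma edgeList_append (l1 : List Pt) (x : Pt) (l2 : List Pt) :
    edgeList (l1 ++ x :: l2) = edgeList (l1 ++ [x]) ++ edgeList (x :: l2) := by
  induction l1 with
  | nil => simp [edgeList]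
  | cons a l1 ih =>
    cases l1 with
    | nil => simp [edgeList_cons2, edgeList_single, edgeList]
    | cons c rest =>
      have h1 : edgeList (a :: c :: rest ++ x :: l2)
          = (a, c) :: edgeList (c :: rest ++ x :: l2) := rfl
      have h2 : edgeList (a :: c :: rest ++ [x]) = (a, c) :: edgeList (c :: rest ++ [x]) := rfl
      simp only [List.cons_append] at *
      rw [h1, h2, ih]
      rfl

lemma edgeList_reverse (l : List Pt) :
    edgeList l.reverse = (edgeList l).reverse.map Prod.swap := by
  induction l with
  | nil => rfl
  | cons a l ih =>
    cases l with
    | nil => rfl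
    | cons b l' =>
      have h1 : (a :: b :: l').reverse = (b :: l').reverse ++ a :: [] := by simp
      rw [h1, edgeList_append ((b :: l').reverse) a []]
      have h2 : edgeList (a :: b :: l') = (a, b) :: edgeList (b :: l') := rfl
      rw [h2]
      have h3 : edgeList ((b :: l').reverse ++ [a])
          = edgeList ((b :: l').reverse) ++ [(b, a)] := by
        have hrev : (b :: l').reverse = l'.reverse ++ [b] := by simp
        rw [hrev]
        have h4 := edgeList_append (l'.reverse) b [a]
        rw [List.append_assoc]
        exact h4
      rw [h3, ih]
      all_goals simp [edgeList_single]
lemma mem_edgeList_reverse {l : List Pt} {e : Pt × Pt} :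
    e ∈ edgeList l.reverse ↔ e.swap ∈ edgeList l := by
  rw [edgeList_reverse, List.mem_map]
  constructor
  · rintro ⟨f, hf, rfl⟩
    rw [List.mem_reverse] at hf
    simpa using hf
  · intro h
    exact ⟨e.swap, List.mem_reverse.mpr h, Prod.swap_swap e⟩

lemma planePath_reverse {S : Finset Pt} {l : List Pt} (h : PlanePath S l) :
    PlanePath S l.reverse := by
  obtain ⟨h1, h2, h3⟩ := h
  refine ⟨List.nodup_reverse.mpr h1, by rwa [List.toFinset_reverse], ?_⟩
  intro e he f hf hef
  have he' := mem_edgeList_reverse.mp he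
  have hf' := mem_edgeList_reverse.mp hf
  have hef' : e.swap ≠ f.swap := fun hc => hef (by
    have := congrArg Prod.swap hc
    simpa using this)
  have hmain := h3 e.swap he' f.swap hf' hef'
  intro z hz
  obtain ⟨za, zb⟩ := hz
  have hz' : z ∈ segment ℝ e.swap.1 e.swap.2 ∩ segment ℝ f.swap.1 f.swap.2 := by
    constructor
    · rw [Prod.fst_swap, Prod.snd_swap, segment_symm]; exact za
    · rw [Prod.fst_swap, Prod.snd_swap, segment_symm]; exact zb
  have hr := hmain hz'
  obtain ⟨m1, m2⟩ := hr
  rw [Prod.fst_swap, Prod.snd_swap, Set.pair_comm] at m1 m2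
  exact ⟨m1, m2⟩
/-- Symmetry helper for the crossing condition. -/
lemma pp_symm {e f : Pt × Pt}
    (h : segment ℝ f.1 f.2 ∩ segment ℝ e.1 e.2 ⊆
        (({f.1, f.2} : Set Pt) ∩ ({e.1, e.2} : Set Pt))) :
    segment ℝ e.1 e.2 ∩ segment ℝ f.1 f.2 ⊆
      (({e.1, e.2} : Set Pt) ∩ ({f.1, f.2} : Set Pt)) := by
  intro z hz
  obtain ⟨c, d⟩ := h ⟨hz.2, hz.1⟩
  exact ⟨d, c⟩

/-- Helper: conclude the crossing condition from disjointness (any orientation). -/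
lemma sub_of_disj {e1 e2 f1 f2 : Pt} {X : Set Pt}
    (h : segment ℝ e1 e2 ∩ segment ℝ f1 f2 = ∅) :
    segment ℝ e1 e2 ∩ segment ℝ f1 f2 ⊆ X := by
  rw [h]; exact empty_subset X

lemma sub_of_disj' {e1 e2 f1 f2 : Pt} {X : Set Pt}
    (h : segment ℝ f1 f2 ∩ segment ℝ e1 e2 = ∅) :
    segment ℝ e1 e2 ∩ segment ℝ f1 f2 ⊆ X := by
  rw [Set.inter_comm] at h
  rw [h]; exact empty_subset X

/-- Core geometric fact for the peel construction: the new edge `(s,q)` versus an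
old edge `(u,v)`. -/
lemma peel_core {S : Finset Pt} (hgp : GenPos S) {s q u v : Pt}
    (hs : s ∈ S) (hq : q ∈ S.erase s)
    (hside : (∀ w ∈ S.erase s, w ≠ q → 0 < det3 s q w) ∨
             (∀ w ∈ S.erase s, w ≠ q → det3 s q w < 0))
    (hu : u ∈ S.erase s) (hv : v ∈ S.erase s) (huv : u ≠ v) :
    segment ℝ s q ∩ segment ℝ u v ⊆
      (({s, q} : Set Pt) ∩ ({u, v} : Set Pt)) := by
  have hqS : q ∈ S := Finset.mem_of_mem_erase hq
  have hqs : q ≠ s := (Finset.mem_erase.mp hq).1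
  have huS : u ∈ S := Finset.mem_of_mem_erase hu
  have hvS : v ∈ S := Finset.mem_of_mem_erase hv
  have hus : u ≠ s := (Finset.mem_erase.mp hu).1
  have hvs : v ≠ s := (Finset.mem_erase.mp hv).1
  by_cases huq : u = q
  · intro z hz
    have hz' : z ∈ segment ℝ q s ∩ segment ℝ q v :=
      ⟨by rw [segment_symm ℝ q s]; exact hz.1, by rw [← huq]; exact hz.2⟩
    have hd : det3 q s v ≠ 0 := genPos_det hgp hqS hs hvS hqs (huq ▸ huv) hvs.symm
    have hzq : z = q := seg_shared hd hz'
    subst hzq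
    exact ⟨by simp, by rw [← huq]; simp⟩
  · by_cases hvq : v = q
    · intro z hz
      have hz' : z ∈ segment ℝ q s ∩ segment ℝ q u :=
        ⟨by rw [segment_symm ℝ q s]; exact hz.1,
         by rw [← hvq, segment_symm ℝ v u]; exact hz.2⟩
      have hd : det3 q s u ≠ 0 := genPos_det hgp hqS hs huS hqs (hvq ▸ huv.symm) hus.symm
      have hzq : z = q := seg_shared hd hz'
      subst hzq
      exact ⟨by simp, by rw [← hvq]; simp⟩
    · -- disjoint
      rcases hside with hpos | hneg
      · exact sub_of_disj (seg_disj (le_of_eq (det3_self2 s q)) (le_of_eq (det3_self3 s q))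
          (hpos u hu huq) (hpos v hv hvq))
      · refine sub_of_disj (seg_disj (a := q) (b := s) ?_ ?_ ?_ ?_)
        · rw [det3_swap12, det3_self2]; simp
        · rw [det3_swap12, det3_self3]; simp
        · rw [det3_swap12]; linarith [hneg u hu huq]
        · rw [det3_swap12]; linarith [hneg v hv hvq]

/-- Peel construction: prepend a strong hull vertex `s` to a plane path on `S.erase s`
starting at the angular extreme `q`. -/
lemma peel {S : Finset Pt} (hgp : GenPos S) {s q : Pt}
    (hs : s ∈ S) (hq : q ∈ S.erase s)
    (hside : (∀ w ∈ S.erase s, w ≠ q → 0 < det3 s q w) ∨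
             (∀ w ∈ S.erase s, w ≠ q → det3 s q w < 0))
    {l' : List Pt} (h' : PlanePath (S.erase s) l') (hh : l'.head? = some q) :
    PlanePath S (s :: l') := by
  obtain ⟨h1, h2, h3⟩ := h'
  have hsl : s ∉ l' := by
    intro hmem
    have : s ∈ S.erase s := h2 ▸ List.mem_toFinset.mpr hmem
    simp at this
  refine ⟨List.nodup_cons.mpr ⟨hsl, h1⟩, ?_, ?_⟩
  · rw [List.toFinset_cons, h2, Finset.insert_erase hs]
  · -- crossing condition
    obtain ⟨q', rest, rfl⟩ : ∃ q' rest, l' = q' :: rest := by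
      cases l' with
      | nil => simp at hh
      | cons a l => exact ⟨a, l, rfl⟩
    have hq' : q = q' := by simpa using hh.symm
    subst hq'
    have hEL : edgeList (s :: q :: rest) = (s, q) :: edgeList (q :: rest) := rfl
    rw [hEL]
    intro e he f hf hef
    rcases List.mem_cons.mp he with rfl | he' <;> rcases List.mem_cons.mp hf with rfl | hf'
    · exact absurd rfl hef
    · obtain ⟨u, v⟩ := f
      have hmem := mem_edgeList hf'
      have huv := edgeList_ne h1 hf'
      exact peel_core hgp hs hq hside (h2 ▸ List.mem_toFinset.mpr hmem.1)
        (h2 ▸ List.mem_toFinset.mpr hmem.2) huv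
    · obtain ⟨u, v⟩ := e
      have hmem := mem_edgeList he'
      have huv := edgeList_ne h1 he'
      exact pp_symm (peel_core hgp hs hq hside (h2 ▸ List.mem_toFinset.mpr hmem.1)
        (h2 ▸ List.mem_toFinset.mpr hmem.2) huv)
    · exact h3 e he' f hf' hef
lemma genPos_subset {S T : Finset Pt} (h : GenPos S) (hsub : T ⊆ S) : GenPos T :=
  fun p hp q hq r hr h1 h2 h3 => h p (hsub hp) q (hsub hq) r (hsub hr) h1 h2 h3

lemma planePath_single (a : Pt) : PlanePath {a} [a] := by
  refine ⟨by simp, by simp, ?_⟩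
  intro e he
  simp [edgeList] at he

lemma split_case {S : Finset Pt} (hgp : GenPos S) {p d : Pt} (hp : p ∈ S)
    (hd : ∀ q ∈ S, q ≠ p → dotd d p q < 0)
    {s t : Pt} (hs : s ∈ S.erase p) (ht : t ∈ S.erase p) (hst : s ≠ t)
    (hor : 0 < det3 p s t)
    (IH : ∀ S' : Finset Pt, S'.card < S.card → GenPos S' →
      ∀ a b : Pt, a ∈ S' → b ∈ S' → a ≠ b →
      ∃ l, PlanePath S' l ∧ l.head? = some a ∧ l.getLast? = some b) :
    ∃ l, PlanePath S l ∧ l.head? = some s ∧ l.getLast? = some t := by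
  classical
  set E := S.erase p with hEdef
  have hmemE : ∀ u ∈ E, u ∈ S ∧ u ≠ p := by
    intro u hu
    exact ⟨Finset.mem_of_mem_erase hu, (Finset.mem_erase.mp hu).1⟩
  have hhalf : ∀ u ∈ E, dotd d p u < 0 := by
    intro u hu
    exact hd u (hmemE u hu).1 (hmemE u hu).2
  have hdet : ∀ a ∈ E, ∀ b ∈ E, a ≠ b → det3 p a b ≠ 0 := by
    intro a ha b hb hab
    exact genPos_det hgp hp (hmemE a ha).1 (hmemE b hb).1
      (Ne.symm (hmemE a ha).2) (Ne.symm (hmemE b hb).2) hab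
  have hanti : ∀ a b : Pt, det3 p b a = - det3 p a b := fun a b => det3_swap23 p a b
  have htr : ∀ a ∈ E, ∀ b ∈ E, ∀ c ∈ E,
      0 < det3 p a b → 0 < det3 p b c → 0 < det3 p a c := by
    intro a ha b hb c hc h1 h2
    exact det3_trans (hhalf a ha) (hhalf b hb) (hhalf c hc) h1 h2
  have htot : ∀ a ∈ E, ∀ b ∈ E, a ≠ b →
      (0 < det3 p a b ∧ ¬ 0 < det3 p b a) ∨ (0 < det3 p b a ∧ ¬ 0 < det3 p a b) := by
    intro a ha b hb hab
    rcases lt_or_gt_of_ne (hdet a ha b hb hab) with h | h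
    · right
      have := hanti a b
      constructor <;> [linarith; linarith]
    · left
      have := hanti a b
      constructor <;> [linarith; linarith]
  -- the two halves
  set A : Finset Pt := E.filter (fun u => u = s ∨ 0 < det3 p u s) with hAdef
  set B : Finset Pt := E.filter (fun u => 0 < det3 p s u) with hBdef
  have hsE : s ∈ E := hs
  have htE : t ∈ E := ht
  have hsA : s ∈ A := by
    rw [hAdef]; exact Finset.mem_filter.mpr ⟨hsE, Or.inl rfl⟩
  have htB : t ∈ B := by
    rw [hBdef]; exact Finset.mem_filter.mpr ⟨htE, hor⟩
  have hAE : A ⊆ E := Finset.filter_subset _ _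
  have hBE : B ⊆ E := Finset.filter_subset _ _
  have hAS : A ⊆ S := hAE.trans (Finset.erase_subset p S)
  have hBS : B ⊆ S := hBE.trans (Finset.erase_subset p S)
  have hpA : p ∉ A := fun h => (hmemE _ (hAE h)).2 rfl
  have hpB : p ∉ B := fun h => (hmemE _ (hBE h)).2 rfl
  have hABcover : ∀ u ∈ E, u ∈ A ∨ u ∈ B := by
    intro u hu
    by_cases hus : u = s
    · left; rw [hAdef]; exact Finset.mem_filter.mpr ⟨hu, Or.inl hus⟩
    · rcases lt_or_gt_of_ne (hdet u hu s hsE hus) with h | h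
      · right; rw [hBdef]
        refine Finset.mem_filter.mpr ⟨hu, ?_⟩
        have := hanti u s
        linarith
      · left; rw [hAdef]; exact Finset.mem_filter.mpr ⟨hu, Or.inr h⟩
  have hABdisj : ∀ u, u ∈ A → u ∈ B → False := by
    intro u huA huB
    have h1 := (Finset.mem_filter.mp huA).2
    have h2 := (Finset.mem_filter.mp huB).2
    rcases h1 with rfl | h1
    · rw [det3_self3] at h2; linarith
    · have := hanti u s; linarith
  have hSsA : ∀ u ∈ A, det3 p s u ≤ 0 := by
    intro u hu
    rcases (Finset.mem_filter.mp hu).2 with rfl | h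
    · rw [det3_self3]
    · have := hanti u s; linarith
  have hSsB : ∀ u ∈ B, 0 < det3 p s u := fun u hu => (Finset.mem_filter.mp hu).2
  have hcardA : A.card < S.card :=
    Finset.card_lt_card ⟨hAS, fun h => hpA (h hp)⟩
  have hcardB : B.card < S.card :=
    Finset.card_lt_card ⟨hBS, fun h => hpB (h hp)⟩
  -- choose x and the path on A
  have hxex : ∃ x pathA, x ∈ A ∧ PlanePath A pathA ∧ pathA.head? = some s ∧
      pathA.getLast? = some x ∧ (∀ u ∈ A, u ≠ x → 0 < det3 p x u) := by
    by_cases hA1 : A = {s}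
    · refine ⟨s, [s], hsA, ?_, rfl, rfl, ?_⟩
      · rw [hA1]; exact planePath_single s
      · intro u hu hus
        rw [hA1] at hu
        exact absurd (Finset.mem_singleton.mp hu) hus
    · obtain ⟨x, hxA, hxmin⟩ := exists_rel_min A (fun u v => 0 < det3 p u v)
        (fun a ha b hb c hc => htr a (hAE ha) b (hAE hb) c (hAE hc))
        (fun a ha b hb hab => htot a (hAE ha) b (hAE hb) hab) ⟨s, hsA⟩
      have hxs : x ≠ s := by
        intro h
        subst h
        obtain ⟨u, hu, hus⟩ : ∃ u ∈ A, u ≠ x := by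
          by_contra hcon
          push_neg at hcon
          exact hA1 (Finset.eq_singleton_iff_unique_mem.mpr ⟨hsA, hcon⟩)
        exact absurd (hxmin u hu hus) (by have := hSsA u hu; linarith)
      obtain ⟨pathA, hppA, hheadA, hlastA⟩ := IH A hcardA (genPos_subset hgp hAS)
        s x hsA hxA (Ne.symm hxs)
      exact ⟨x, pathA, hxA, hppA, hheadA, hlastA, hxmin⟩
  obtain ⟨x, pathA, hxA, hppA, hheadA, hlastA, hxmin⟩ := hxex
  -- choose y and the path on B
  have hyex : ∃ y pathB, y ∈ B ∧ PlanePath B pathB ∧ pathB.head? = some y ∧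
      pathB.getLast? = some t ∧
      ((∀ u ∈ B, u ≠ y → 0 < det3 p y u) ∨ (∀ u ∈ B, u ≠ y → det3 p y u < 0)) := by
    by_cases hB1 : B = {t}
    · refine ⟨t, [t], htB, ?_, rfl, rfl, Or.inl ?_⟩
      · rw [hB1]; exact planePath_single t
      · intro u hu hut
        rw [hB1] at hu
        exact absurd (Finset.mem_singleton.mp hu) hut
    · obtain ⟨M, hMB, hMmax⟩ := exists_rel_min B (fun u v => 0 < det3 p v u)
        (fun a ha b hb c hc h1 h2 => htr c (hBE hc) b (hBE hb) a (hBE ha) h2 h1)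
        (fun a ha b hb hab => by
          have h := htot a (hBE ha) b (hBE hb) hab
          tauto) ⟨t, htB⟩
      by_cases hMt : M = t
      · obtain ⟨m, hmB, hmmin⟩ := exists_rel_min B (fun u v => 0 < det3 p u v)
          (fun a ha b hb c hc => htr a (hBE ha) b (hBE hb) c (hBE hc))
          (fun a ha b hb hab => htot a (hBE ha) b (hBE hb) hab) ⟨t, htB⟩
        have hmt : m ≠ t := by
          intro h
          apply hB1
          apply Finset.eq_singleton_iff_unique_mem.mpr
          refine ⟨htB, ?_⟩
          intro u hu
          by_contra hut
          have h1 := hmmin u hu (fun e => hut (e.trans h))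
          have h2 := hMmax u hu (fun e => hut (e.trans hMt))
          rw [h] at h1
          rw [hMt] at h2
          have := hanti t u
          linarith
        obtain ⟨pathB, hppB, hheadB, hlastB⟩ := IH B hcardB (genPos_subset hgp hBS)
          m t hmB htB hmt
        refine ⟨m, pathB, hmB, hppB, hheadB, hlastB, Or.inl hmmin⟩
      · obtain ⟨pathB, hppB, hheadB, hlastB⟩ := IH B hcardB (genPos_subset hgp hBS)
          M t hMB htB hMt
        refine ⟨M, pathB, hMB, hppB, hheadB, hlastB, Or.inr ?_⟩
        intro u hu huM
        have := hMmax u hu huM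
        rw [hanti]; linarith
  obtain ⟨y, pathB, hyB, hppB, hheadB, hlastB, hyside⟩ := hyex
  obtain ⟨hndA, htfA, hcrA⟩ := hppA
  obtain ⟨hndB, htfB, hcrB⟩ := hppB
  have hxS : x ∈ S := hAS hxA
  have hyS : y ∈ S := hBS hyB
  have hxp : x ≠ p := (hmemE x (hAE hxA)).2
  have hyp : y ≠ p := (hmemE y (hBE hyB)).2
  have hxy : x ≠ y := fun h => hABdisj x hxA (h ▸ hyB)
  have hxB : ∀ u ∈ B, 0 < det3 p x u := by
    intro u hu
    by_cases hxs : x = s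
    · rw [hxs]; exact hSsB u hu
    · have h1 : 0 < det3 p x s := by
        rcases (Finset.mem_filter.mp hxA).2 with h | h
        · exact absurd h hxs
        · exact h
      exact htr x (hAE hxA) s hsE u (hBE hu) h1 (hSsB u hu)
  have hyA : ∀ u ∈ A, det3 p y u < 0 := by
    intro u hu
    have hsy : 0 < det3 p s y := hSsB y hyB
    by_cases hus : u = s
    · rw [hus]
      have := hanti s y
      linarith
    · have h1 : 0 < det3 p u s := by
        rcases (Finset.mem_filter.mp hu).2 with h | h
        · exact absurd h hus
        · exact h
      have h2 : 0 < det3 p u y := htr u (hAE hu) s hsE y (hBE hyB) h1 hsy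
      have := hanti u y
      linarith
  have hApne : pathA ≠ [] := by intro h; rw [h] at hheadA; simp at hheadA
  have hBpne : pathB ≠ [] := by intro h; rw [h] at hheadB; simp at hheadB
  have hheadL : (pathA ++ p :: pathB).head? = some s := by
    cases pathA with
    | nil => simp at hheadA
    | cons a l => simpa using hheadA
  have hlastL : (pathA ++ p :: pathB).getLast? = some t := by
    have hpb : (p :: pathB).getLast? = some t := by
      cases pathB with
      | nil => simp at hheadB
      | cons b l => rw [List.getLast?_cons_cons]; exact hlastB
    rw [List.getLast?_append, hpb]; rfl
  obtain ⟨preA, hpre⟩ : ∃ preA, pathA = preA ++ [x] := by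
    refine ⟨pathA.dropLast, ?_⟩
    have h1 := List.dropLast_append_getLast hApne
    have h2 : pathA.getLast hApne = x := by
      have := List.getLast?_eq_getLast hApne
      rw [this] at hlastA
      exact Option.some_inj.mp hlastA
    rw [← h2]
    exact h1.symm
  have h1 : edgeList (pathA ++ [p]) = edgeList pathA ++ [(x, p)] := by
    conv_lhs => rw [hpre, List.append_assoc]
    rw [show ([x] ++ [p] : List Pt) = x :: [p] from rfl, edgeList_append preA x [p], ← hpre]
    rfl
  have h2 : edgeList (p :: pathB) = (p, y) :: edgeList pathB := by
    cases pathB with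
    | nil => simp at hheadB
    | cons b l =>
      rw [show b = y from by simpa using hheadB]
      rfl
  have hEdge : edgeList (pathA ++ p :: pathB)
      = edgeList pathA ++ (x, p) :: (p, y) :: edgeList pathB := by
    rw [edgeList_append pathA p pathB, h1, h2, List.append_assoc]
    rfl
  have hvA : ∀ {u v : Pt}, (u, v) ∈ edgeList pathA → u ∈ A ∧ v ∈ A ∧ u ≠ v := by
    intro u v h
    have hm := mem_edgeList h
    exact ⟨htfA ▸ List.mem_toFinset.mpr hm.1, htfA ▸ List.mem_toFinset.mpr hm.2,
      edgeList_ne hndA h⟩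
  have hvB : ∀ {u v : Pt}, (u, v) ∈ edgeList pathB → u ∈ B ∧ v ∈ B ∧ u ≠ v := by
    intro u v h
    have hm := mem_edgeList h
    exact ⟨htfB ▸ List.mem_toFinset.mpr hm.1, htfB ▸ List.mem_toFinset.mpr hm.2,
      edgeList_ne hndB h⟩
  -- core crossing lemmas
  have CAB : ∀ u v w z : Pt, u ∈ A → v ∈ A → w ∈ B → z ∈ B →
      segment ℝ u v ∩ segment ℝ w z = ∅ :=
    fun u v w z hu hv hw hz => seg_disj (hSsA u hu) (hSsA v hv) (hSsB w hw) (hSsB z hz)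
  have CAxp : ∀ u v : Pt, u ∈ A → v ∈ A → u ≠ v →
      segment ℝ u v ∩ segment ℝ x p ⊆ (({u, v} : Set Pt) ∩ ({x, p} : Set Pt)) := by
    intro u v hu hv huv
    by_cases hxu : x = u
    · intro z hz
      have hz' : z ∈ segment ℝ x v ∩ segment ℝ x p := ⟨by rw [hxu]; exact hz.1, hz.2⟩
      have hd0 : det3 x v p ≠ 0 := genPos_det hgp hxS (hAS hv) hp (hxu ▸ huv) hxp
        ((hmemE v (hAE hv)).2)
      have hzx : z = x := seg_shared hd0 hz'
      subst hzx
      exact ⟨by rw [hxu]; exact Set.mem_insert _ _, Set.mem_insert _ _⟩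
    · by_cases hxv : x = v
      · intro z hz
        have hz' : z ∈ segment ℝ x u ∩ segment ℝ x p :=
          ⟨by rw [hxv, segment_symm ℝ v u]; exact hz.1, hz.2⟩
        have hd0 : det3 x u p ≠ 0 := genPos_det hgp hxS (hAS hu) hp
          (fun e => hxu e) hxp ((hmemE u (hAE hu)).2)
        have hzx : z = x := seg_shared hd0 hz'
        subst hzx
        exact ⟨by rw [hxv]; exact Set.mem_insert_of_mem _ rfl, Set.mem_insert _ _⟩
      · refine sub_of_disj' (seg_disj (a := p) (b := x) ?_ ?_ ?_ ?_)
        · exact le_of_eq (det3_self3 p x)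
        · exact le_of_eq (det3_self2 p x)
        · exact hxmin u hu (fun e => hxu e.symm)
        · exact hxmin v hv (fun e => hxv e.symm)
  have CApy : ∀ u v : Pt, u ∈ A → v ∈ A → segment ℝ p y ∩ segment ℝ u v = ∅ := by
    intro u v hu hv
    refine seg_disj (a := y) (b := p) ?_ ?_ ?_ ?_
    · exact le_of_eq (det3_self3 y p)
    · exact le_of_eq (det3_self2 y p)
    · have := det3_swap12 p y u
      have := hyA u hu
      linarith
    · have := det3_swap12 p y v
      have := hyA v hv
      linarith
  have Cxppy : segment ℝ x p ∩ segment ℝ p y ⊆ (({x, p} : Set Pt) ∩ ({p, y} : Set Pt)) := by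
    intro z hz
    have hz' : z ∈ segment ℝ p x ∩ segment ℝ p y := ⟨(segment_symm ℝ x p) ▸ hz.1, hz.2⟩
    have hd0 : det3 p x y ≠ 0 := genPos_det hgp hp hxS hyS (Ne.symm hxp) (Ne.symm hyp) hxy
    have hzp : z = p := seg_shared hd0 hz'
    subst hzp
    exact ⟨Set.mem_insert_of_mem _ rfl, Set.mem_insert _ _⟩
  have CxpB : ∀ u v : Pt, u ∈ B → v ∈ B → segment ℝ x p ∩ segment ℝ u v = ∅ := by
    intro u v hu hv
    exact seg_disj (a := p) (b := x) (le_of_eq (det3_self3 p x)) (le_of_eq (det3_self2 p x))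
      (hxB u hu) (hxB v hv)
  have CpyB : ∀ u v : Pt, u ∈ B → v ∈ B → u ≠ v →
      segment ℝ p y ∩ segment ℝ u v ⊆ (({p, y} : Set Pt) ∩ ({u, v} : Set Pt)) := by
    intro u v hu hv huv
    by_cases hyu : y = u
    · intro z hz
      have hz' : z ∈ segment ℝ y p ∩ segment ℝ y v :=
        ⟨(segment_symm ℝ p y) ▸ hz.1, by rw [hyu]; exact hz.2⟩
      have hd0 : det3 y p v ≠ 0 := genPos_det hgp hyS hp (hBS hv) hyp
        (hyu ▸ huv) (Ne.symm ((hmemE v (hBE hv)).2))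
      have hzy : z = y := seg_shared hd0 hz'
      subst hzy
      exact ⟨Set.mem_insert_of_mem _ rfl, by rw [hyu]; exact Set.mem_insert _ _⟩
    · by_cases hyv : y = v
      · intro z hz
        have hz' : z ∈ segment ℝ y p ∩ segment ℝ y u :=
          ⟨(segment_symm ℝ p y) ▸ hz.1, by rw [hyv, segment_symm ℝ v u]; exact hz.2⟩
        have hd0 : det3 y p u ≠ 0 := genPos_det hgp hyS hp (hBS hu) hyp
          (fun e => hyu e) (Ne.symm ((hmemE u (hBE hu)).2))
        have hzy : z = y := seg_shared hd0 hz'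
        subst hzy
        exact ⟨Set.mem_insert_of_mem _ rfl, by rw [hyv]; exact Set.mem_insert_of_mem _ rfl⟩
      · rcases hyside with hpos | hneg
        · exact sub_of_disj (seg_disj (a := p) (b := y) (le_of_eq (det3_self2 p y))
            (le_of_eq (det3_self3 p y)) (hpos u hu (fun e => hyu e.symm))
            (hpos v hv (fun e => hyv e.symm)))
        · refine sub_of_disj (seg_disj (a := y) (b := p) ?_ ?_ ?_ ?_)
          · exact le_of_eq (det3_self3 y p)
          · exact le_of_eq (det3_self2 y p)
          · have := det3_swap12 p y u
            have := hneg u hu (fun e => hyu e.symm)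
            linarith
          · have := det3_swap12 p y v
            have := hneg v hv (fun e => hyv e.symm)
            linarith
  refine ⟨pathA ++ p :: pathB, ⟨?_, ?_, ?_⟩, hheadL, hlastL⟩
  · rw [List.nodup_append]
    refine ⟨hndA, List.nodup_cons.mpr ⟨fun h => hpB (htfB ▸ List.mem_toFinset.mpr h), hndB⟩, ?_⟩
    intro a haA b hmem rfl
    have haA' : a ∈ A := htfA ▸ List.mem_toFinset.mpr haA
    rcases List.mem_cons.mp hmem with rfl | hmem'
    · exact hpA haA'
    · exact hABdisj a haA' (htfB ▸ List.mem_toFinset.mpr hmem')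
  · rw [List.toFinset_append, List.toFinset_cons, htfA, htfB]
    ext u
    simp only [Finset.mem_union, Finset.mem_insert]
    constructor
    · rintro (h | rfl | h)
      exacts [hAS h, hp, hBS h]
    · intro hu
      by_cases hup : u = p
      · exact Or.inr (Or.inl hup)
      · rcases hABcover u (Finset.mem_erase.mpr ⟨hup, hu⟩) with h | h
        exacts [Or.inl h, Or.inr (Or.inr h)]
  · rw [hEdge]
    intro e he f hf hef
    have hclass : ∀ g : Pt × Pt, g ∈ edgeList pathA ++ (x, p) :: (p, y) :: edgeList pathB →
        g ∈ edgeList pathA ∨ g = (x, p) ∨ g = (p, y) ∨ g ∈ edgeList pathB := by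
      intro g hg
      rcases List.mem_append.mp hg with h | h
      · exact Or.inl h
      · rcases List.mem_cons.mp h with h | h
        · exact Or.inr (Or.inl h)
        · rcases List.mem_cons.mp h with h | h
          · exact Or.inr (Or.inr (Or.inl h))
          · exact Or.inr (Or.inr (Or.inr h))
    rcases hclass e he with heA | rfl | rfl | heB <;>
      rcases hclass f hf with hfA | rfl | rfl | hfB
    · exact hcrA e heA f hfA hef
    · obtain ⟨u, v⟩ := e
      obtain ⟨hu, hv, huv⟩ := hvA heA
      exact CAxp u v hu hv huv
    · obtain ⟨u, v⟩ := e
      obtain ⟨hu, hv, huv⟩ := hvA heA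
      exact sub_of_disj' (CApy u v hu hv)
    · obtain ⟨u, v⟩ := e
      obtain ⟨w, z⟩ := f
      obtain ⟨hu, hv, huv⟩ := hvA heA
      obtain ⟨hw, hz, hwz⟩ := hvB hfB
      exact sub_of_disj (CAB u v w z hu hv hw hz)
    · obtain ⟨u, v⟩ := f
      obtain ⟨hu, hv, huv⟩ := hvA hfA
      exact pp_symm (CAxp u v hu hv huv)
    · exact absurd rfl hef
    · exact Cxppy
    · obtain ⟨u, v⟩ := f
      obtain ⟨hu, hv, huv⟩ := hvB hfB
      exact sub_of_disj (CxpB u v hu hv)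
    · obtain ⟨u, v⟩ := f
      obtain ⟨hu, hv, huv⟩ := hvA hfA
      exact sub_of_disj (CApy u v hu hv)
    · exact pp_symm Cxppy
    · exact absurd rfl hef
    · obtain ⟨u, v⟩ := f
      obtain ⟨hu, hv, huv⟩ := hvB hfB
      exact CpyB u v hu hv huv
    · obtain ⟨w, z⟩ := e
      obtain ⟨u, v⟩ := f
      obtain ⟨hw, hz, hwz⟩ := hvB heB
      obtain ⟨hu, hv, huv⟩ := hvA hfA
      exact sub_of_disj' (CAB u v w z hu hv hw hz)
    · obtain ⟨u, v⟩ := e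
      obtain ⟨hu, hv, huv⟩ := hvB heB
      exact sub_of_disj' (CxpB u v hu hv)
    · obtain ⟨u, v⟩ := e
      obtain ⟨hu, hv, huv⟩ := hvB heB
      exact pp_symm (CpyB u v hu hv huv)
    · exact hcrB e heB f hfB hef

lemma planePath_two {s t : Pt} (hst : s ≠ t) : PlanePath {s, t} [s, t] := by
  refine ⟨by simp [hst], by simp, ?_⟩
  intro e he f hf hef
  have he' : e = (s, t) := by simpa [edgeList] using he
  have hf' : f = (s, t) := by simpa [edgeList] using hf
  exact absurd (he'.trans hf'.symm) hef

theorem main_aux : ∀ n : ℕ, ∀ S : Finset Pt, S.card ≤ n → GenPos S →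
    ∀ s t : Pt, s ∈ S → t ∈ S → s ≠ t →
    ∃ l, PlanePath S l ∧ l.head? = some s ∧ l.getLast? = some t := by
  intro n
  induction n with
  | zero =>
    intro S hcard _ s t hs _ _
    exact absurd (Finset.card_pos.mpr ⟨s, hs⟩) (by omega)
  | succ n ih =>
    intro S hcard hgp s t hs ht hst
    have peelCase : ∀ a b : Pt, a ∈ S → b ∈ S → a ≠ b → SV S a →
        ∃ l, PlanePath S l ∧ l.head? = some a ∧ l.getLast? = some b := by
      intro a b ha hb hab hsv
      obtain ⟨-, d, hd⟩ := hsv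
      by_cases hE : S.erase a = {b}
      · have hSab : S = {a, b} := by
          rw [← Finset.insert_erase ha, hE]
        refine ⟨[a, b], by rw [hSab]; exact planePath_two hab, rfl, by simp⟩
      · set E := S.erase a with hEdef
        have hbE : b ∈ E := Finset.mem_erase.mpr ⟨Ne.symm hab, hb⟩
        have hmemE : ∀ u ∈ E, u ∈ S ∧ u ≠ a := fun u hu =>
          ⟨Finset.mem_of_mem_erase hu, (Finset.mem_erase.mp hu).1⟩
        have hhalf : ∀ u ∈ E, dotd d a u < 0 := fun u hu =>
          hd u (hmemE u hu).1 (hmemE u hu).2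
        have hdet : ∀ u ∈ E, ∀ v ∈ E, u ≠ v → det3 a u v ≠ 0 := by
          intro u hu v hv huv
          exact genPos_det hgp ha (hmemE u hu).1 (hmemE v hv).1
            (Ne.symm (hmemE u hu).2) (Ne.symm (hmemE v hv).2) huv
        have hanti : ∀ u v : Pt, det3 a v u = - det3 a u v := fun u v => det3_swap23 a u v
        have htrE : ∀ u ∈ E, ∀ v ∈ E, ∀ w ∈ E,
            0 < det3 a u v → 0 < det3 a v w → 0 < det3 a u w := by
          intro u hu v hv w hw h1 h2
          exact det3_trans (hhalf u hu) (hhalf v hv) (hhalf w hw) h1 h2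
        have htotE : ∀ u ∈ E, ∀ v ∈ E, u ≠ v →
            (0 < det3 a u v ∧ ¬ 0 < det3 a v u) ∨ (0 < det3 a v u ∧ ¬ 0 < det3 a u v) := by
          intro u hu v hv huv
          rcases lt_or_gt_of_ne (hdet u hu v hv huv) with h | h
          · right
            have := hanti u v
            constructor <;> [linarith; linarith]
          · left
            have := hanti u v
            constructor <;> [linarith; linarith]
        obtain ⟨m, hmE, hmmin⟩ := exists_rel_min E (fun u v => 0 < det3 a u v)
          htrE htotE ⟨b, hbE⟩
        obtain ⟨M, hME, hMmax⟩ := exists_rel_min E (fun u v => 0 < det3 a v u)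
          (fun u hu v hv w hw h1 h2 => htrE w hw v hv u hu h2 h1)
          (fun u hu v hv huv => by
            have h := htotE u hu v hv huv
            tauto) ⟨b, hbE⟩
        have hq : ∃ q ∈ E, q ≠ b ∧
            ((∀ w ∈ E, w ≠ q → 0 < det3 a q w) ∨ (∀ w ∈ E, w ≠ q → det3 a q w < 0)) := by
          by_cases hmb : m = b
          · refine ⟨M, hME, ?_, Or.inr ?_⟩
            · intro hMb
              apply hE
              apply Finset.eq_singleton_iff_unique_mem.mpr
              refine ⟨hbE, ?_⟩
              intro u hu
              by_contra hub
              have h1 := hmmin u hu (fun e => hub (e.trans hmb))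
              have h2 := hMmax u hu (fun e => hub (e.trans hMb))
              rw [hmb] at h1
              rw [hMb] at h2
              have := hanti b u
              linarith
            · intro w hw hwM
              have := hMmax w hw hwM
              have := hanti w M
              linarith
          · exact ⟨m, hmE, hmb, Or.inl hmmin⟩
        obtain ⟨q, hqE, hqb, hside⟩ := hq
        have hcardE : E.card ≤ n := by
          rw [hEdef, Finset.card_erase_of_mem ha]
          omega
        obtain ⟨l', hpp', hh', hl'⟩ := ih E hcardE
          (genPos_subset hgp (Finset.erase_subset a S)) q b hqE hbE hqb
        refine ⟨a :: l', peel hgp ha hqE hside hpp' hh', rfl, ?_⟩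
        cases l' with
        | nil => simp at hh'
        | cons c l'' => rw [List.getLast?_cons_cons]; exact hl'
    by_cases hsv : SV S s
    · exact peelCase s t hs ht hst hsv
    by_cases htv : SV S t
    · obtain ⟨l, hl, h1, h2⟩ := peelCase t s ht hs (Ne.symm hst) htv
      exact ⟨l.reverse, planePath_reverse hl,
        by rw [List.head?_reverse]; exact h2,
        by rw [List.getLast?_reverse]; exact h1⟩
    · obtain ⟨p, hpS, d, hd⟩ := exists_SV ⟨s, hs⟩
      have hps : p ≠ s := fun h => hsv (h ▸ ⟨hpS, d, hd⟩)
      have hpt : p ≠ t := fun h => htv (h ▸ ⟨hpS, d, hd⟩)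
      have hsE : s ∈ S.erase p := Finset.mem_erase.mpr ⟨Ne.symm hps, hs⟩
      have htE : t ∈ S.erase p := Finset.mem_erase.mpr ⟨Ne.symm hpt, ht⟩
      have hdst : det3 p s t ≠ 0 := genPos_det hgp hpS hs ht hps hpt hst
      have IH' : ∀ S' : Finset Pt, S'.card < S.card → GenPos S' →
          ∀ a b : Pt, a ∈ S' → b ∈ S' → a ≠ b →
          ∃ l, PlanePath S' l ∧ l.head? = some a ∧ l.getLast? = some b := by
        intro S' hlt
        exact ih S' (by omega)
      rcases lt_or_gt_of_ne hdst with h | h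
      · obtain ⟨l, hl, h1, h2⟩ := split_case hgp hpS hd htE hsE (Ne.symm hst)
          (by have := det3_swap23 p s t; linarith) IH'
        exact ⟨l.reverse, planePath_reverse hl,
          by rw [List.head?_reverse]; exact h2,
          by rw [List.getLast?_reverse]; exact h1⟩
      · exact split_case hgp hpS hd hsE htE hst h IH'

/-- On any point set in general position there is a plane Hamiltonian
path with prescribed distinct endpoints `s` and `t`. -/
theorem stmt_1 (S : Finset Pt) (hgp : GenPos S)
    (s t : Pt) (hs : s ∈ S) (ht : t ∈ S) (hst : s ≠ t) :
    ∃ l : List Pt, PlanePath S l ∧ l.head? = some s ∧ l.getLast? = some t := by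
  exact main_aux S.card S le_rfl hgp s t hs ht hst
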